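/- Suppose there exists a perfect B[−k₁,k₂](m) set, p is a prime dividing m, a and r are positive integers with a | p−1, gcd(a(k₁+k₂), r) = 1, p | a(k₁+k₂)+r, r ≤ a, and ⌊k₁/p⌋ + ⌊k₂/p⌋ = ⌊(k₁+k₂)/p⌋. Then a(k₁+k₂)+r divides m. -/
import Mathlib


/-- `B` is a perfect `B[-k₁,k₂](q)` set: every nonzero element of `ZMod q` is uniquely
`a * b` with `a ∈ [-k₁,k₂] \ {0}`, `b ∈ B`, and `(k₁+k₂) * |B| = q - 1`. -/
def IsPerfectSplitter (k₁ k₂ q : ℕ) (B : Finset (ZMod q)) : Prop :=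
  (∀ g : ZMod q, g ≠ 0 → ∃! r : ℤ × ZMod q,
      r.1 ∈ Finset.Icc (-(k₁ : ℤ)) (k₂ : ℤ) ∧ r.1 ≠ 0 ∧ r.2 ∈ B ∧ (r.1 : ZMod q) * r.2 = g) ∧
    (k₁ + k₂) * B.card = q - 1

section AuxStmt10
open Finset


theorem ker_card (m p : ℕ) [NeZero m] (hp : 0 < p) (hpm : p ∣ m) :
    (Finset.univ.filter fun x : ZMod m => (ZMod.castHom hpm (ZMod p)) x = 0).card = m / p := by
  have hker : ∀ x : ZMod m, (ZMod.castHom hpm (ZMod p)) x = 0 ↔ p ∣ x.val := by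
    intro x
    rw [ZMod.castHom_apply, ← ZMod.natCast_val, ZMod.natCast_eq_zero_iff]
  have hpm' : p * (m / p) = m := Nat.mul_div_cancel' hpm
  rw [show (Finset.univ.filter fun x : ZMod m => (ZMod.castHom hpm (ZMod p)) x = 0)
      = Finset.univ.filter fun x : ZMod m => p ∣ x.val from Finset.filter_congr
        (fun x _ => hker x)]
  rw [← Finset.card_range (m / p)]
  apply Finset.card_bij (fun (x : ZMod m) _ => x.val / p)
  · intro x hx
    exact Finset.mem_range.mpr (Nat.div_lt_div_of_lt_of_dvd hpm (ZMod.val_lt x))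
  · intro x hx y hy hxy
    simp only [Finset.mem_filter] at hx hy
    apply ZMod.val_injective
    rw [← Nat.div_mul_cancel hx.2, ← Nat.div_mul_cancel hy.2, hxy]
  · intro j hj
    have hlt : p * j < m := by
      calc p * j < p * (m / p) := by
            exact mul_lt_mul_of_pos_left (Finset.mem_range.mp hj) hp
        _ = m := hpm'
    refine ⟨((p * j : ℕ) : ZMod m), ?_, ?_⟩
    · simp only [Finset.mem_filter, Finset.mem_univ, true_and]
      rw [ZMod.val_cast_of_lt hlt]
      exact Dvd.intro j rfl
    · rw [ZMod.val_cast_of_lt hlt, Nat.mul_div_cancel_left _ hp]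

theorem erase_Icc_card (A B : ℕ) :
    (((Finset.Icc (-(A:ℤ)) (B:ℤ))).erase 0).card = A + B := by
  rw [Finset.card_erase_of_mem (by simp), Int.card_Icc]
  omega

theorem mult_count (k₁ k₂ p : ℕ) (hp : 0 < p) :
    (((Finset.Icc (-(k₁:ℤ)) (k₂:ℤ)).erase 0).filter fun s => (p:ℤ) ∣ s).card
      = k₁ / p + k₂ / p := by
  have hple : (0:ℤ) < (p:ℤ) := by exact_mod_cast hp
  have key : ∀ u : ℤ, (-(((k₁/p : ℕ)):ℤ) ≤ u ∧ u ≤ ((k₂/p : ℕ):ℤ))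
      ↔ (-(k₁:ℤ) ≤ (p:ℤ) * u ∧ (p:ℤ) * u ≤ (k₂:ℤ)) := by
    intro u
    rw [Int.natCast_div, Int.natCast_div]
    constructor
    · rintro ⟨h1, h2⟩
      constructor
      · have h1' : -u ≤ (k₁:ℤ) / (p:ℤ) := by omega
        have := (Int.le_ediv_iff_mul_le hple).mp h1'
        nlinarith
      · have := (Int.le_ediv_iff_mul_le hple).mp h2
        nlinarith
    · rintro ⟨h1, h2⟩
      constructor
      · have : -u * (p:ℤ) ≤ (k₁:ℤ) := by nlinarith
        have := (Int.le_ediv_iff_mul_le hple).mpr this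
        omega
      · have : u * (p:ℤ) ≤ (k₂:ℤ) := by nlinarith
        exact (Int.le_ediv_iff_mul_le hple).mpr this
  rw [← erase_Icc_card (k₁/p) (k₂/p)]
  apply Finset.card_bij (fun (s : ℤ) _ => s / (p:ℤ)) <;>
    simp only [Finset.mem_filter, Finset.mem_erase, Finset.mem_Icc]
  · rintro s ⟨⟨hs0, hs1, hs2⟩, hdvd⟩
    obtain ⟨u, rfl⟩ := hdvd
    rw [Int.mul_ediv_cancel_left _ (by positivity)]
    have := (key u).mpr ⟨hs1, hs2⟩
    refine ⟨by rintro rfl; simp at hs0, this.1, this.2⟩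
  · rintro s ⟨⟨hs0, hs1, hs2⟩, hdvd⟩ t ⟨⟨ht0, ht1, ht2⟩, hdvd'⟩ h
    obtain ⟨u, rfl⟩ := hdvd
    obtain ⟨v, rfl⟩ := hdvd'
    rw [Int.mul_ediv_cancel_left _ (by positivity), Int.mul_ediv_cancel_left _ (by positivity)] at h
    rw [h]
  · rintro u ⟨hu0, hu1, hu2⟩
    have := (key u).mp ⟨hu1, hu2⟩
    refine ⟨(p:ℤ) * u, ⟨⟨?_, this.1, this.2⟩, ⟨u, rfl⟩⟩, Int.mul_ediv_cancel_left _ (by positivity)⟩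
    intro h
    rcases mul_eq_zero.mp h with h | h
    · omega
    · exact hu0 h

theorem splitter_count {m : ℕ} [NeZero m] (k₁ k₂ : ℕ) (B : Finset (ZMod m))
    (hB1 : ∀ g : ZMod m, g ≠ 0 → ∃! r : ℤ × ZMod m,
      r.1 ∈ Finset.Icc (-(k₁ : ℤ)) (k₂ : ℤ) ∧ r.1 ≠ 0 ∧ r.2 ∈ B ∧ (r.1 : ZMod m) * r.2 = g)
    (D : Finset (ZMod m)) (h0 : (0 : ZMod m) ∉ D) :
    ((((Finset.Icc (-(k₁:ℤ)) (k₂:ℤ)).erase 0) ×ˢ B).filter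
      fun r => (r.1 : ZMod m) * r.2 ∈ D).card = D.card := by
  apply Finset.card_bij (fun r _ => (r.1 : ZMod m) * r.2)
  · intro r hr; exact (Finset.mem_filter.mp hr).2
  · intro r1 h1 r2 h2 heq
    rw [Finset.mem_filter, Finset.mem_product, Finset.mem_erase] at h1 h2
    have hne : (r1.1 : ZMod m) * r1.2 ≠ 0 := fun h => h0 (h ▸ h1.2)
    obtain ⟨u, -, hun⟩ := hB1 _ hne
    have e1 := hun r1 ⟨h1.1.1.2, h1.1.1.1, h1.1.2, rfl⟩
    have e2 := hun r2 ⟨h2.1.1.2, h2.1.1.1, h2.1.2, heq.symm⟩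
    rw [e1, e2]
  · intro g hg
    have hgne : g ≠ 0 := fun h => h0 (h ▸ hg)
    obtain ⟨u, ⟨hu1, hu2, hu3, hu4⟩, -⟩ := hB1 g hgne
    exact ⟨u, Finset.mem_filter.mpr ⟨Finset.mem_product.mpr
      ⟨Finset.mem_erase.mpr ⟨hu2, hu1⟩, hu3⟩, by rw [hu4]; exact hg⟩, hu4⟩

set_option maxHeartbeats 1000000 in
theorem arith_endgame (k₁ k₂ m p a r c0 c1 : ℕ)
    (hp2 : 2 ≤ p) (hm0 : 0 < m)
    (ha : 0 < a) (hr : 0 < r)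
    (hap : a ∣ p - 1) (hgcd : Nat.gcd (a * (k₁ + k₂)) r = 1)
    (hpdvd : p ∣ a * (k₁ + k₂) + r) (hra : r ≤ a)
    (hfloor : k₁ / p + k₂ / p = (k₁ + k₂) / p)
    (hpm : p ∣ m)
    (e0 : (k₁ + k₂) * c0 + 1 = m)
    (e1 : (k₁ / p + k₂ / p) * c0 + ((k₁ + k₂) - (k₁ / p + k₂ / p)) * c1 + 1 = m / p) :
    a * (k₁ + k₂) + r ∣ m := by
  obtain ⟨b, hb⟩ := hap
  have hb1 : 1 ≤ b := by
    rcases Nat.eq_zero_or_pos b with h | h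
    · subst h; simp at hb; omega
    · exact h
  have hd₁ : p * (k₁ / p) + k₁ % p = k₁ := Nat.div_add_mod k₁ p
  have hd₂ : p * (k₂ / p) + k₂ % p = k₂ := Nat.div_add_mod k₂ p
  have hdk : p * ((k₁ + k₂) / p) + (k₁ + k₂) % p = k₁ + k₂ := Nat.div_add_mod _ p
  have hm₁ : k₁ % p < p := Nat.mod_lt _ (by omega)
  have hm₂ : k₂ % p < p := Nat.mod_lt _ (by omega)
  have hmk : (k₁ + k₂) % p < p := Nat.mod_lt _ (by omega)
  rw [← hfloor] at hdk
  rw [show p * (k₁ / p + k₂ / p) = p * (k₁ / p) + p * (k₂ / p) from Nat.mul_add p _ _] at hdk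
  have hρeq : k₁ % p + k₂ % p = (k₁ + k₂) % p := by omega
  -- notation
  have hKk : k₁ / p + k₂ / p ≤ k₁ + k₂ := by
    have := Nat.div_le_self k₁ p; have := Nat.div_le_self k₂ p; omega
  -- integer versions
  have habz : (a:ℤ) * b = (p:ℤ) - 1 := by
    zify [show 1 ≤ p by omega] at hb; linarith
  have hkz : (p:ℤ) * ((k₁/p : ℕ)) + (p:ℤ) * ((k₂/p : ℕ)) + (((k₁ + k₂) % p : ℕ):ℤ) = (k₁:ℤ) + k₂ := by
    exact_mod_cast hdk
  have hpzdvd : (p:ℤ) ∣ (a:ℤ) * ((k₁:ℤ) + k₂) + r := by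
    have h := Int.natCast_dvd_natCast.mpr hpdvd
    push_cast at h
    exact h
  obtain ⟨u, hu⟩ := hpzdvd
  have hdvd2 : (p:ℤ) ∣ (a:ℤ) * (((k₁ + k₂) % p : ℕ):ℤ) + r :=
    ⟨u - (a:ℤ) * (((k₁/p : ℕ):ℤ) + ((k₂/p : ℕ):ℤ)), by linear_combination hu + (a:ℤ) * hkz⟩
  obtain ⟨t, ht⟩ := hdvd2
  have hpz : (1:ℤ) < (p:ℤ) := by exact_mod_cast hp2
  have haz : (1:ℤ) ≤ (a:ℤ) := by exact_mod_cast ha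
  have hrz : (1:ℤ) ≤ (r:ℤ) := by exact_mod_cast hr
  have hraz : (r:ℤ) ≤ (a:ℤ) := by exact_mod_cast hra
  have hρ0 : (0:ℤ) ≤ (((k₁ + k₂) % p : ℕ):ℤ) := Int.natCast_nonneg _
  have hρub : (((k₁ + k₂) % p : ℕ):ℤ) ≤ (p:ℤ) - 1 := by
    have := hmk; omega
  have ht1 : 1 ≤ t := by nlinarith [ht]
  have hta : t ≤ (a:ℤ) := by
    have h1 : (p:ℤ) * t ≤ (p:ℤ) * a := by
      nlinarith [mul_le_mul_of_nonneg_left hρub (by positivity : (0:ℤ) ≤ (a:ℤ)), ht]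
    exact le_of_mul_le_mul_left h1 (by linarith)
  obtain ⟨c, hc⟩ : (a:ℤ) ∣ t - r :=
    ⟨(((k₁ + k₂) % p : ℕ):ℤ) - t * b, by linear_combination -ht + t * habz⟩
  have htr : t = (r:ℤ) := by
    rcases lt_trichotomy c 0 with h | h | h
    · have h2 : (a:ℤ) * c ≤ (a:ℤ) * (-1) := by
        apply mul_le_mul_of_nonneg_left (by omega) (by linarith)
      linarith [hc]
    · rw [h, mul_zero] at hc; omega
    · have h2 : (a:ℤ) * 1 ≤ (a:ℤ) * c := by
        apply mul_le_mul_of_nonneg_left (by omega) (by linarith)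
      linarith [hc]
  rw [htr] at ht
  have hρrb : (((k₁ + k₂) % p : ℕ):ℤ) = (r:ℤ) * b := by
    have h : (a:ℤ) * (((k₁ + k₂) % p : ℕ):ℤ) = (a:ℤ) * ((r:ℤ) * b) := by
      linear_combination ht - (r:ℤ) * habz
    exact mul_left_cancel₀ (by positivity) h
  -- counting equations in ℤ
  have hMp : (p:ℤ) * ((m/p : ℕ):ℤ) = (m:ℤ) := by exact_mod_cast Nat.mul_div_cancel' hpm
  have he0 : ((k₁:ℤ) + k₂) * c0 + 1 = (m:ℤ) := by exact_mod_cast e0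
  zify [hKk] at e1
  simp only [← Int.natCast_div] at e1
  have hkey : (((k₁ + k₂) % p : ℕ):ℤ) * c0
      = (p:ℤ) * (((k₁:ℤ) + k₂) - (((k₁/p : ℕ):ℤ) + ((k₂/p : ℕ):ℤ))) * c1 + ((p:ℤ) - 1) := by
    linear_combination he0 - (p:ℤ) * e1 - hMp + (c0:ℤ) * hkz
  have hkKw : ((k₁:ℤ) + k₂) - (((k₁/p : ℕ):ℤ) + ((k₂/p : ℕ):ℤ))
      = (b:ℤ) * ((a:ℤ) * (((k₁/p : ℕ):ℤ) + ((k₂/p : ℕ):ℤ)) + r) := by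
    linear_combination -hkz - (((k₁/p : ℕ):ℤ) + ((k₂/p : ℕ):ℤ)) * habz + hρrb
  have hrc0 : (r:ℤ) * c0
      = (p:ℤ) * ((a:ℤ) * (((k₁/p : ℕ):ℤ) + ((k₂/p : ℕ):ℤ)) + r) * c1 + a := by
    have hfac : (b:ℤ) * ((r:ℤ) * c0
        - (p:ℤ) * ((a:ℤ) * (((k₁/p : ℕ):ℤ) + ((k₂/p : ℕ):ℤ)) + r) * c1 - a) = 0 := by
      linear_combination hkey - (c0:ℤ) * hρrb + (p:ℤ) * c1 * hkKw - habz
    rcases mul_eq_zero.mp hfac with h | h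
    · exfalso; have hbz : (1:ℤ) ≤ (b:ℤ) := by exact_mod_cast hb1
      omega
    · linarith
  have hn : (a:ℤ) * ((k₁:ℤ) + k₂) + r
      = (p:ℤ) * ((a:ℤ) * (((k₁/p : ℕ):ℤ) + ((k₂/p : ℕ):ℤ)) + r) := by
    linear_combination -(a:ℤ) * hkz + (a:ℤ) * hρrb + (r:ℤ) * habz
  have hfinal : (a:ℤ) * m = ((a:ℤ) * ((k₁:ℤ) + k₂) + r) * ((c0:ℤ) - c1) := by
    linear_combination -(a:ℤ) * he0 - hrc0 + (c1:ℤ) * hn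
  have hdvdam : ((a * (k₁ + k₂) + r : ℕ):ℤ) ∣ (a:ℤ) * m :=
    ⟨(c0:ℤ) - c1, by push_cast; linear_combination hfinal⟩
  have hcop : Nat.Coprime a (a * (k₁ + k₂) + r) := by
    have h1 : Nat.Coprime a r := Nat.Coprime.coprime_dvd_left (Dvd.intro _ rfl) hgcd
    have h2 := (Nat.coprime_add_mul_left_right a r (k₁ + k₂)).mpr h1
    rwa [add_comm r (a * (k₁ + k₂))] at h2
  have hcopz : IsCoprime ((a * (k₁ + k₂) + r : ℕ):ℤ) ((a:ℕ):ℤ) :=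
    Nat.isCoprime_iff_coprime.mpr hcop.symm
  have hfin : ((a * (k₁ + k₂) + r : ℕ):ℤ) ∣ (m:ℤ) := hcopz.dvd_of_dvd_mul_left hdvdam
  exact_mod_cast hfin


theorem stmt10 (k₁ k₂ m : ℕ) (h1 : 1 ≤ k₁) (h12 : k₁ ≤ k₂)
    (B : Finset (ZMod m)) (hB : IsPerfectSplitter k₁ k₂ m B)
    (p : ℕ) (hp : p.Prime) (hpm : p ∣ m)
    (a r : ℕ) (ha : 0 < a) (hr : 0 < r) (hap : a ∣ p - 1)
    (hgcd : Nat.gcd (a * (k₁ + k₂)) r = 1) (hpdvd : p ∣ a * (k₁ + k₂) + r)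
    (hra : r ≤ a) (hfloor : k₁ / p + k₂ / p = (k₁ + k₂) / p) :
    a * (k₁ + k₂) + r ∣ m := by
  classical
  obtain ⟨hB1, hB2⟩ := hB
  rcases Nat.eq_zero_or_pos m with hm0 | hm0
  · exfalso
    subst hm0
    have h0 : (k₁ + k₂) * B.card = 0 := by omega
    have hcard : B.card = 0 := by
      rcases Nat.mul_eq_zero.mp h0 with h | h
      · omega
      · exact h
    obtain ⟨⟨s, b⟩, ⟨-, -, hbB, -⟩, -⟩ := hB1 1 one_ne_zero
    rw [Finset.card_eq_zero.mp hcard] at hbB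
    exact absurd hbB (Finset.notMem_empty _)
  haveI : NeZero m := ⟨hm0.ne'⟩
  haveI : Fact p.Prime := ⟨hp⟩
  set S : Finset ℤ := (Finset.Icc (-(k₁:ℤ)) (k₂:ℤ)).erase 0 with hSdef
  set P : Finset (ℤ × ZMod m) := S ×ˢ B with hPdef
  -- all products are nonzero
  have hallcard := splitter_count k₁ k₂ B hB1 (Finset.univ.erase 0) (by simp)
  have hfe : (P.filter fun r => (r.1 : ZMod m) * r.2 ∈ Finset.univ.erase 0)
      = P.filter fun r => (r.1 : ZMod m) * r.2 ≠ 0 :=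
    Finset.filter_congr (fun x _ => by simp)
  rw [hfe] at hallcard
  have hUcard : (Finset.univ.erase (0 : ZMod m)).card = m - 1 := by
    rw [Finset.card_erase_of_mem (Finset.mem_univ _), Finset.card_univ, ZMod.card]
  have hPcard : P.card = m - 1 := by
    rw [hPdef, Finset.card_product, hSdef, erase_Icc_card, hB2]
  have hPeq : P.filter (fun r => (r.1 : ZMod m) * r.2 ≠ 0) = P :=
    Finset.eq_of_subset_of_card_le (Finset.filter_subset _ _)
      (le_of_eq (by rw [hallcard, hUcard, hPcard]))
  have hnz : ∀ r ∈ P, (r.1 : ZMod m) * r.2 ≠ 0 := by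
    intro r hr
    rw [← hPeq] at hr
    exact (Finset.mem_filter.mp hr).2
  -- counting multiples of p
  set D : Finset (ZMod m) := (Finset.univ.filter fun x => (ZMod.castHom hpm (ZMod p)) x = 0).erase 0 with hDdef
  have hDcard : D.card = m / p - 1 := by
    have h0D : (0 : ZMod m) ∈ Finset.univ.filter
        fun x => (ZMod.castHom hpm (ZMod p)) x = 0 :=
      Finset.mem_filter.mpr ⟨Finset.mem_univ _, map_zero _⟩
    rw [hDdef, Finset.card_erase_of_mem h0D, ker_card m p hp.pos hpm]
  have hQ := splitter_count k₁ k₂ B hB1 D (by simp [hDdef])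
  have hfQ : (P.filter fun r => (r.1 : ZMod m) * r.2 ∈ D)
      = P.filter fun r => (ZMod.castHom hpm (ZMod p)) ((r.1 : ZMod m) * r.2) = 0 := by
    apply Finset.filter_congr
    intro x hx
    simp only [hDdef, Finset.mem_erase, Finset.mem_filter, Finset.mem_univ, true_and]
    exact ⟨fun h => h.2, fun h => ⟨hnz x hx, h⟩⟩
  rw [hfQ, hDcard] at hQ
  -- split the count
  set B₀ : Finset (ZMod m) := B.filter fun b => (ZMod.castHom hpm (ZMod p)) b = 0 with hB₀def
  have hsplitmul : ∀ s : ℤ, ∀ b : ZMod m,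
      (ZMod.castHom hpm (ZMod p)) ((s : ZMod m) * b)
        = ((s : ZMod p)) * (ZMod.castHom hpm (ZMod p)) b := by
    intro s b; rw [map_mul, map_intCast]
  have hQeq : (P.filter fun r => (ZMod.castHom hpm (ZMod p)) ((r.1 : ZMod m) * r.2) = 0)
      = ((S.filter fun s => (p:ℤ) ∣ s) ×ˢ B) ∪ ((S.filter fun s => ¬ (p:ℤ) ∣ s) ×ˢ B₀) := by
    ext ⟨s, b⟩
    simp only [Finset.mem_filter, Finset.mem_union, Finset.mem_product, hPdef, hB₀def]
    constructor
    · rintro ⟨⟨hsS, hbB⟩, hz⟩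
      rw [hsplitmul s b] at hz
      by_cases hd : (p:ℤ) ∣ s
      · exact Or.inl ⟨⟨hsS, hd⟩, hbB⟩
      · rcases mul_eq_zero.mp hz with h | h
        · exact absurd ((ZMod.intCast_zmod_eq_zero_iff_dvd s p).mp h) hd
        · exact Or.inr ⟨⟨hsS, hd⟩, hbB, h⟩
    · rintro (⟨⟨hsS, hd⟩, hbB⟩ | ⟨⟨hsS, hd⟩, hbB, hb0⟩)
      · refine ⟨⟨hsS, hbB⟩, ?_⟩
        rw [hsplitmul s b, (ZMod.intCast_zmod_eq_zero_iff_dvd s p).mpr hd, zero_mul]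
      · refine ⟨⟨hsS, hbB⟩, ?_⟩
        rw [hsplitmul s b, hb0, mul_zero]
  have hdisj : Disjoint ((S.filter fun s => (p:ℤ) ∣ s) ×ˢ B)
      ((S.filter fun s => ¬ (p:ℤ) ∣ s) ×ˢ B₀) := by
    rw [Finset.disjoint_left]
    rintro ⟨s, b⟩ h1 h2
    rw [Finset.mem_product, Finset.mem_filter] at h1 h2
    exact h2.1.2 h1.1.2
  have hSpcard : (S.filter fun s => (p:ℤ) ∣ s).card = k₁ / p + k₂ / p := by
    rw [hSdef]; exact mult_count k₁ k₂ p hp.pos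
  have hSsum : (S.filter fun s => (p:ℤ) ∣ s).card
      + (S.filter fun s => ¬ (p:ℤ) ∣ s).card = k₁ + k₂ := by
    rw [Finset.card_filter_add_card_filter_not, hSdef, erase_Icc_card]
  have hSncard : (S.filter fun s => ¬ (p:ℤ) ∣ s).card = (k₁ + k₂) - (k₁ / p + k₂ / p) := by
    have hK : k₁ / p + k₂ / p ≤ k₁ + k₂ := by
      have := Nat.div_le_self k₁ p; have := Nat.div_le_self k₂ p; omega
    omega
  have hQ2 : (k₁ / p + k₂ / p) * B.card + ((k₁ + k₂) - (k₁ / p + k₂ / p)) * B₀.card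
      = m / p - 1 := by
    rw [← hQ, hQeq, Finset.card_union_of_disjoint hdisj, Finset.card_product,
      Finset.card_product, hSpcard, hSncard]
  -- assemble
  have hmp1 : 1 ≤ m / p := Nat.div_pos (Nat.le_of_dvd hm0 hpm) hp.pos
  have E0 : (k₁ + k₂) * B.card + 1 = m := by omega
  have E1 : (k₁ / p + k₂ / p) * B.card + ((k₁ + k₂) - (k₁ / p + k₂ / p)) * B₀.card + 1
      = m / p := by omega
  exact arith_endgame k₁ k₂ m p a r B.card B₀.card hp.two_le hm0 ha hr hap hgcd hpdvd hra
    hfloor hpm E0 E1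

end AuxStmt10
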